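/- arXiv:1210.4279 — 2 statements merged into one kernel-verified Lean document; each statement's English description precedes it below -/
import Mathlib

section
/- Let (Ω, F, P) be a probability space and Z : Ω → (0,∞) an F-measurable function with Z > 0 P-almost surely and E_P[Z] = 1. Define the probability measure Q := P.withDensity Z, and let G ⊆ F be a sub-σ-algebra. Then E_P[Z | G] > 0 P-almost surely (equivalently Q-almost surely), and Q-almost surely E_Q[Z⁻¹ | G] = (E_P[Z | G])⁻¹. -/
open MeasureTheory ENNReal NNReal

/-- The identity `E_Q[Z⁻¹ | G] = (E_P[Z | G])⁻¹` (with `Q = P.withDensity Z`) used for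
the total mass `ϱ_t(1) = Z_t⁻¹` of the unnormalized filter, together with the strict
positivity `E_P[Z | G] > 0` a.s. -/
theorem stmt_4 {Ω : Type*} [mΩ : MeasurableSpace Ω] (P : Measure Ω) [IsProbabilityMeasure P]
    (Z : Ω → ℝ) (hZmeas : Measurable Z) (hZpos : ∀ᵐ ω ∂P, 0 < Z ω)
    (hZint : Integrable Z P) (hZexp : ∫ ω, Z ω ∂P = 1)
    (G : MeasurableSpace Ω) (hG : G ≤ mΩ)
    (Q : @Measure Ω mΩ) (hQ : Q = P.withDensity (fun ω => ENNReal.ofReal (Z ω))) :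
    (∀ᵐ ω ∂P, 0 < (P[Z | G]) ω) ∧
    (∀ᵐ ω ∂Q, 0 < (P[Z | G]) ω) ∧
    (∀ᵐ ω ∂Q, (Q[(fun ω => (Z ω)⁻¹) | G]) ω = ((P[Z | G]) ω)⁻¹) := by
  have hZnn : 0 ≤ᵐ[P] Z := hZpos.mono fun ω h => h.le
  have hEsm : StronglyMeasurable[G] (P[Z | G]) := stronglyMeasurable_condExp
  have hEmeas : Measurable[G] (P[Z | G]) := hEsm.measurable
  have hEmeas' : Measurable[mΩ] (P[Z | G]) := hEmeas.mono hG le_rfl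
  have hEnn : 0 ≤ᵐ[P] (P[Z | G]) := condExp_nonneg hZnn
  have hEint : Integrable (P[Z | G]) P := integrable_condExp
  have hQP : Q ≪ P := by rw [hQ]; exact withDensity_absolutelyContinuous _ _
  have hζmeas : Measurable[mΩ] fun ω => ENNReal.ofReal (Z ω) := hZmeas.ennreal_ofReal
  have hξmeas : Measurable[mΩ] fun ω => ENNReal.ofReal ((P[Z | G]) ω) := hEmeas'.ennreal_ofReal
  -- The trims of `Q` and of `P.withDensity (ofReal ∘ E)` to `G` agree.
  have htrim : Q.trim hG = (P.withDensity fun ω => ENNReal.ofReal ((P[Z | G]) ω)).trim hG := by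
    refine Measure.ext fun s hs => ?_
    rw [trim_measurableSet_eq hG hs, trim_measurableSet_eq hG hs, hQ,
      withDensity_apply _ (hG s hs), withDensity_apply _ (hG s hs),
      ← ofReal_integral_eq_lintegral_ofReal hZint.restrict (ae_restrict_of_ae hZnn),
      ← ofReal_integral_eq_lintegral_ofReal hEint.restrict (ae_restrict_of_ae hEnn),
      setIntegral_condExp hG hZint hs]
  -- transfer of set-lintegrals of `G`-measurable functions from `Q` to the other density measure
  have key : ∀ (φ : Ω → ℝ≥0∞), Measurable[G] φ → ∀ (s : Set Ω), MeasurableSet[G] s →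
      ∫⁻ ω in s, φ ω ∂Q
        = ∫⁻ ω in s, ENNReal.ofReal ((P[Z | G]) ω) * φ ω ∂P := by
    intro φ hφ s hs
    rw [← lintegral_indicator (hG s hs), ← lintegral_trim hG (hφ.indicator hs), htrim,
      lintegral_trim hG (hφ.indicator hs), lintegral_indicator (hG s hs),
      setLIntegral_withDensity_eq_setLIntegral_mul _ hξmeas (hφ.mono hG le_rfl) (hG s hs)]
    rfl
  -- Positivity a.s. under `P`
  have hNmeas : MeasurableSet[G] {ω | (P[Z | G]) ω ≤ 0} := hEmeas measurableSet_Iic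
  have hQN : Q {ω | (P[Z | G]) ω ≤ 0} = 0 := by
    rw [← trim_measurableSet_eq hG hNmeas, htrim, trim_measurableSet_eq hG hNmeas,
      withDensity_apply _ (hG _ hNmeas)]
    refine le_antisymm (le_of_eq ?_) zero_le
    refine (setLIntegral_congr_fun (hG _ hNmeas)
      (fun ω hω => ?_)).trans lintegral_zero
    simpa [ENNReal.ofReal_eq_zero] using hω
  have hPN : P {ω | (P[Z | G]) ω ≤ 0} = 0 := by
    have h0 : ∫⁻ ω in {ω | (P[Z | G]) ω ≤ 0}, ENNReal.ofReal (Z ω) ∂P = 0 := by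
      rw [← withDensity_apply _ (hG _ hNmeas), ← hQ]; exact hQN
    have h1 : (fun ω => ENNReal.ofReal (Z ω))
        =ᵐ[P.restrict {ω | (P[Z | G]) ω ≤ 0}] 0 :=
      (lintegral_eq_zero_iff hζmeas).mp h0
    have h2 : ∀ᵐ ω ∂(P.restrict {ω | (P[Z | G]) ω ≤ 0}), False := by
      filter_upwards [h1, ae_restrict_of_ae hZpos] with ω hω hωpos
      simp only [Pi.zero_apply, ENNReal.ofReal_eq_zero] at hω
      exact absurd hω (not_le.mpr hωpos)
    have h3 := Filter.eventually_false_iff_eq_bot.mp h2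
    rw [ae_eq_bot] at h3
    rw [← Measure.restrict_apply_univ, h3]
    simp
  have hpos1 : ∀ᵐ ω ∂P, 0 < (P[Z | G]) ω := by
    rw [ae_iff]; simpa [not_lt] using hPN
  have hpos2 : ∀ᵐ ω ∂Q, 0 < (P[Z | G]) ω := hQP.ae_le hpos1
  refine ⟨hpos1, hpos2, ?_⟩
  -- `Q` is a finite measure
  haveI : IsFiniteMeasure Q := by
    constructor
    rw [hQ, withDensity_apply _ MeasurableSet.univ, Measure.restrict_univ,
      ← ofReal_integral_eq_lintegral_ofReal hZint hZnn, hZexp]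
    exact ENNReal.ofReal_lt_top
  have hZposQ : ∀ᵐ ω ∂Q, 0 < Z ω := hQP.ae_le hZpos
  -- integrability of `Z⁻¹` w.r.t. `Q`
  have hf : Integrable (fun ω => (Z ω)⁻¹) Q := by
    rw [hQ, integrable_withDensity_iff hζmeas (ae_of_all _ fun ω => ENNReal.ofReal_lt_top)]
    refine (integrable_const (1 : ℝ)).congr ?_
    filter_upwards [hZpos] with ω hω
    rw [ENNReal.toReal_ofReal hω.le, inv_mul_cancel₀ hω.ne']
  -- integrability of `(P[Z|G])⁻¹` w.r.t. `Q`
  have hg : Integrable (fun ω => ((P[Z | G]) ω)⁻¹) Q := by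
    refine ⟨((hEmeas.inv.stronglyMeasurable).mono hG).aestronglyMeasurable, ?_⟩
    rw [HasFiniteIntegral]
    have hk := key (fun ω => ‖((P[Z | G]) ω)⁻¹‖ₑ) (hEmeas.inv.enorm)
      Set.univ MeasurableSet.univ
    rw [Measure.restrict_univ, Measure.restrict_univ] at hk
    rw [hk]
    have heq : (fun ω => ENNReal.ofReal ((P[Z | G]) ω) * ‖((P[Z | G]) ω)⁻¹‖ₑ)
        =ᵐ[P] fun _ => (1 : ℝ≥0∞) := by
      filter_upwards [hpos1] with ω hω
      rw [Real.enorm_eq_ofReal (inv_nonneg.mpr hω.le), ← ENNReal.ofReal_mul hω.le,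
        mul_inv_cancel₀ hω.ne']
      simp
    rw [lintegral_congr_ae heq]
    simp
  -- the set-integral identity
  have hg_eq : ∀ s : Set Ω, MeasurableSet[G] s → Q s < ⊤ →
      ∫ ω in s, ((P[Z | G]) ω)⁻¹ ∂Q = ∫ ω in s, (Z ω)⁻¹ ∂Q := by
    intro s hs _
    have hgnn : 0 ≤ᵐ[Q.restrict s] fun ω => ((P[Z | G]) ω)⁻¹ :=
      ae_restrict_of_ae (hpos2.mono fun ω hω => (inv_nonneg.mpr hω.le))
    have hfnn : 0 ≤ᵐ[Q.restrict s] fun ω => (Z ω)⁻¹ :=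
      ae_restrict_of_ae (hZposQ.mono fun ω hω => (inv_nonneg.mpr hω.le))
    rw [integral_eq_lintegral_of_nonneg_ae hgnn
        ((hEmeas'.inv).aestronglyMeasurable),
      integral_eq_lintegral_of_nonneg_ae hfnn ((hZmeas.inv).aestronglyMeasurable)]
    congr 1
    have hL : ∫⁻ ω in s, ENNReal.ofReal (((P[Z | G]) ω)⁻¹) ∂Q = P s := by
      rw [key (fun ω => ENNReal.ofReal (((P[Z | G]) ω)⁻¹)) (hEmeas.inv.ennreal_ofReal) s hs]
      have heq : (fun ω => ENNReal.ofReal ((P[Z | G]) ω) * ENNReal.ofReal (((P[Z | G]) ω)⁻¹))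
          =ᵐ[P.restrict s] fun _ => (1 : ℝ≥0∞) := by
        filter_upwards [ae_restrict_of_ae hpos1] with ω hω
        rw [← ENNReal.ofReal_mul hω.le, mul_inv_cancel₀ hω.ne']
        simp
      rw [lintegral_congr_ae heq]
      simp
    have hR : ∫⁻ ω in s, ENNReal.ofReal ((Z ω)⁻¹) ∂Q = P s := by
      rw [hQ, setLIntegral_withDensity_eq_setLIntegral_mul _ (g := fun ω => ENNReal.ofReal ((Z ω)⁻¹)) hζmeas
        (hZmeas.inv.ennreal_ofReal) (hG s hs)]
      have heq : (fun ω => ((fun ω => ENNReal.ofReal (Z ω)) *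
            fun ω => ENNReal.ofReal ((Z ω)⁻¹)) ω)
          =ᵐ[P.restrict s] fun _ => (1 : ℝ≥0∞) := by
        filter_upwards [ae_restrict_of_ae hZpos] with ω hω
        simp only [Pi.mul_apply]
        rw [← ENNReal.ofReal_mul hω.le, mul_inv_cancel₀ hω.ne']
        simp
      rw [lintegral_congr_ae heq]
      simp
    rw [hL, hR]
  have hmain := ae_eq_condExp_of_forall_setIntegral_eq (m₀ := mΩ) (μ := Q) hG hf
    (fun s _ _ => hg.restrict) hg_eq
    (StronglyMeasurable.aestronglyMeasurable (hEmeas.inv.stronglyMeasurable))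
  filter_upwards [hmain] with ω hω
  exact hω.symm
end

section
/- Let (Ω, F, P) be a probability space, Z : Ω → (0,∞) F-measurable with Z > 0 P-almost surely and E_P[Z] = 1, and Q := P.withDensity Z. Let G ⊆ F be a sub-σ-algebra and X : Ω → ℝ be P-integrable. Then X Z⁻¹ is Q-integrable, E_Q[Z⁻¹ | G] > 0 Q-almost surely, and P-almost surely E_P[X | G] = E_Q[X Z⁻¹ | G] / E_Q[Z⁻¹ | G]. -/
open MeasureTheory NNReal ENNReal

/-- The Kallianpur–Striebel formula (kall_stri), abstractly: with `Q = P.withDensity Z`,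
for `P`-integrable `X` one has `X Z⁻¹ ∈ L¹(Q)`, `E_Q[Z⁻¹ | G] > 0` `Q`-a.s., and
`E_P[X | G] = E_Q[X Z⁻¹ | G] / E_Q[Z⁻¹ | G]` `P`-a.s. -/
theorem stmt_5 {Ω : Type*} [mΩ : MeasurableSpace Ω] (P : Measure Ω) [IsProbabilityMeasure P]
    (Z : Ω → ℝ) (hZmeas : Measurable Z) (hZpos : ∀ᵐ ω ∂P, 0 < Z ω)
    (hZint : Integrable Z P) (hZexp : ∫ ω, Z ω ∂P = 1)
    (G : MeasurableSpace Ω) (hG : G ≤ mΩ)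
    (Q : @Measure Ω mΩ) (hQ : Q = P.withDensity (fun ω => ENNReal.ofReal (Z ω)))
    (X : Ω → ℝ) (hXint : Integrable X P) :
    Integrable (fun ω => X ω * (Z ω)⁻¹) Q ∧
    (∀ᵐ ω ∂Q, 0 < (Q[(fun ω => (Z ω)⁻¹) | G]) ω) ∧
    (∀ᵐ ω ∂P, (P[X | G]) ω =
      (Q[(fun ω => X ω * (Z ω)⁻¹) | G]) ω / (Q[(fun ω => (Z ω)⁻¹) | G]) ω) := by
  letI : MeasurableSpace Ω := mΩ
  set f : Ω → ℝ≥0 := fun ω => (Z ω).toNNReal with hf_def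
  have hfmeas : Measurable[mΩ] f := hZmeas.real_toNNReal
  have hQd : Q = P.withDensity (fun ω => ((f ω : ℝ≥0∞))) := hQ
  -- Q is a probability measure
  have hQprob : IsProbabilityMeasure Q := by
    constructor
    rw [hQ, withDensity_apply _ MeasurableSet.univ, Measure.restrict_univ,
      ← ofReal_integral_eq_lintegral_ofReal hZint (hZpos.mono fun ω h => h.le), hZexp,
      ENNReal.ofReal_one]
  haveI := hQprob
  haveI : SigmaFinite (Q.trim hG) := inferInstance
  haveI : SigmaFinite (P.trim hG) := inferInstance
  -- a.e. identity for the density transformation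
  have hsmul : ∀ g : Ω → ℝ, (fun ω => f ω • (g ω * (Z ω)⁻¹)) =ᵐ[P] g := by
    intro g
    filter_upwards [hZpos] with ω hω
    show (f ω : ℝ) * (g ω * (Z ω)⁻¹) = g ω
    rw [hf_def, Real.coe_toNNReal _ hω.le]
    field_simp
  -- integrability transfer
  have hint : ∀ g : Ω → ℝ, Integrable g P → Integrable (fun ω => g ω * (Z ω)⁻¹) Q := by
    intro g hg
    rw [hQd, integrable_withDensity_iff_integrable_smul hfmeas]
    exact hg.congr (hsmul g).symm
  -- set integral transfer
  have hsetint : ∀ (g : Ω → ℝ) (s : Set Ω), MeasurableSet[mΩ] s →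
      ∫ ω in s, g ω * (Z ω)⁻¹ ∂Q = ∫ ω in s, g ω ∂P := by
    intro g s hs
    rw [hQd, setIntegral_withDensity_eq_setIntegral_smul hfmeas _ hs]
    exact setIntegral_congr_ae hs ((hsmul g).mono fun ω h _ => h)
  -- absolute continuity in both directions
  have hQP : Q ≪ P := hQ ▸ withDensity_absolutelyContinuous P _
  have hPQ : P ≪ Q := by
    refine Measure.AbsolutelyContinuous.mk fun s hs hQs => ?_
    rw [hQ, withDensity_apply _ hs,
      lintegral_eq_zero_iff hZmeas.ennreal_ofReal] at hQs
    have h5 : ∀ᵐ (ω : Ω) ∂P.restrict s, False := by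
      filter_upwards [hQs, ae_restrict_of_ae hZpos] with ω h0 hpos
      rw [Pi.zero_apply, ENNReal.ofReal_eq_zero] at h0
      exact absurd h0 (not_le.2 hpos)
    rw [ae_iff] at h5
    simpa [Measure.restrict_apply_univ] using h5
  have hint1 : Integrable (fun ω => X ω * (Z ω)⁻¹) Q := hint X hXint
  have hintZ : Integrable (fun ω => (Z ω)⁻¹) Q := by
    have := hint (fun _ => 1) (integrable_const 1)
    simpa using this
  have hZinvposQ : ∀ᵐ ω ∂Q, 0 < (Z ω)⁻¹ :=
    (hZpos.filter_mono hQP.ae_le).mono fun ω h => inv_pos.2 h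
  have hYsm : StronglyMeasurable[G] (Q[(fun ω => (Z ω)⁻¹)|G]) := stronglyMeasurable_condExp
  -- positivity of the conditional expectation of Z⁻¹
  have hYpos : ∀ᵐ ω ∂Q, 0 < (Q[(fun ω => (Z ω)⁻¹)|G]) ω := by
    set Y := Q[(fun ω => (Z ω)⁻¹)|G] with hY
    have hsmeasG : MeasurableSet[G] {ω | Y ω ≤ 0} := hYsm.measurable measurableSet_Iic
    have hsmeas : MeasurableSet[mΩ] {ω | Y ω ≤ 0} := hG _ hsmeasG
    have h1 : ∫ ω in {ω | Y ω ≤ 0}, Y ω ∂Q = ∫ ω in {ω | Y ω ≤ 0}, (Z ω)⁻¹ ∂Q :=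
      setIntegral_condExp hG hintZ hsmeasG
    have h2 : ∫ ω in {ω | Y ω ≤ 0}, Y ω ∂Q ≤ 0 :=
      setIntegral_nonpos (μ := Q) hsmeas fun ω hω => hω
    have h3 : ∫ ω in {ω | Y ω ≤ 0}, (Z ω)⁻¹ ∂Q = 0 :=
      le_antisymm (h1 ▸ h2) (setIntegral_nonneg_of_ae (μ := Q) (hZinvposQ.mono fun ω h => h.le))
    have h4 : (fun ω => (Z ω)⁻¹) =ᵐ[Q.restrict {ω | Y ω ≤ 0}] 0 :=
      (integral_eq_zero_iff_of_nonneg_ae (μ := Q.restrict {ω | Y ω ≤ 0})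
        (ae_restrict_of_ae (hZinvposQ.mono fun ω h => h.le)) hintZ.integrableOn).1 h3
    have h5 : ∀ᵐ (ω : Ω) ∂Q.restrict {ω | Y ω ≤ 0}, False := by
      filter_upwards [h4, ae_restrict_of_ae hZinvposQ] with ω h0 hpos
      rw [Pi.zero_apply] at h0
      exact hpos.ne' h0
    rw [ae_iff] at h5
    have h6 : Q {ω | Y ω ≤ 0} = 0 := by
      simpa [Measure.restrict_apply_univ] using h5
    rw [ae_iff]
    simpa only [not_lt] using h6
  -- the pull-out property
  have hE : StronglyMeasurable[G] (P[X|G]) := stronglyMeasurable_condExp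
  have hEZint : Integrable (fun ω => (P[X|G]) ω * (Z ω)⁻¹) Q := hint _ integrable_condExp
  have hpull : Q[(fun ω => (P[X|G]) ω * (Z ω)⁻¹)|G]
      =ᵐ[Q] fun ω => (P[X|G]) ω * (Q[(fun ω => (Z ω)⁻¹)|G]) ω :=
    condExp_mul_of_stronglyMeasurable_left (m := G) (μ := Q) hE hEZint hintZ
  have hEYint : Integrable (fun ω => (P[X|G]) ω * (Q[(fun ω => (Z ω)⁻¹)|G]) ω) Q :=
    integrable_condExp.congr hpull
  -- set-integral characterization of the main identity
  have hseteq : ∀ s, MeasurableSet[G] s → Q s < ⊤ →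
      ∫ ω in s, (P[X|G]) ω * (Q[(fun ω => (Z ω)⁻¹)|G]) ω ∂Q
        = ∫ ω in s, X ω * (Z ω)⁻¹ ∂Q := by
    intro s hs _
    have hs' : MeasurableSet[mΩ] s := hG s hs
    calc ∫ ω in s, (P[X|G]) ω * (Q[(fun ω => (Z ω)⁻¹)|G]) ω ∂Q
        = ∫ ω in s, (Q[(fun ω => (P[X|G]) ω * (Z ω)⁻¹)|G]) ω ∂Q :=
          (setIntegral_congr_ae hs' (hpull.mono fun ω h _ => h)).symm
      _ = ∫ ω in s, (P[X|G]) ω * (Z ω)⁻¹ ∂Q := setIntegral_condExp hG hEZint hs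
      _ = ∫ ω in s, (P[X|G]) ω ∂P := hsetint _ s hs'
      _ = ∫ ω in s, X ω ∂P := setIntegral_condExp hG hXint hs
      _ = ∫ ω in s, X ω * (Z ω)⁻¹ ∂Q := (hsetint X s hs').symm
  have hmain : (fun ω => (P[X|G]) ω * (Q[(fun ω => (Z ω)⁻¹)|G]) ω)
      =ᵐ[Q] Q[(fun ω => X ω * (Z ω)⁻¹)|G] :=
    ae_eq_condExp_of_forall_setIntegral_eq hG hint1
      (fun s _ _ => hEYint.integrableOn) hseteq
      ((hE.mul hYsm).aestronglyMeasurable)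
  refine ⟨hint1, hYpos, ?_⟩
  filter_upwards [hmain.filter_mono hPQ.ae_le, hYpos.filter_mono hPQ.ae_le] with ω h1 h2
  rw [eq_div_iff h2.ne']
  exact h1
end
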